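/- If (X,f) is a non-wandering dynamical system with the shadowing property, then the set of minimal points of f is dense in X. -/
import Mathlib


open Set Function

variable {X : Type*}

/-- A `δ`-pseudo-orbit of `f`. -/
def IsPseudoOrbit [MetricSpace X] (f : X → X) (δ : ℝ) (x : ℕ → X) : Prop :=
  ∀ n : ℕ, dist (f (x n)) (x (n + 1)) < δ

/-- `z` ε-traces the sequence `x`. -/
def Traces [MetricSpace X] (f : X → X) (ε : ℝ) (z : X) (x : ℕ → X) : Prop :=
  ∀ n : ℕ, dist (f^[n] z) (x n) < ε

/-- The shadowing property. -/
def HasShadowing [MetricSpace X] (f : X → X) : Prop :=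
  ∀ ε > (0 : ℝ), ∃ δ > (0 : ℝ), ∀ x : ℕ → X, IsPseudoOrbit f δ x → ∃ z : X, Traces f ε z x

/-- The shadowing property of the restriction of `f` to an invariant set `S`. -/
def HasShadowingOn [MetricSpace X] (f : X → X) (S : Set X) : Prop :=
  ∀ ε > (0 : ℝ), ∃ δ > (0 : ℝ), ∀ x : ℕ → X, (∀ n, x n ∈ S) → IsPseudoOrbit f δ x →
    ∃ z ∈ S, Traces f ε z x

/-- Non-wandering point. -/
def NonWanderingPt [TopologicalSpace X] (f : X → X) (x : X) : Prop :=
  ∀ U ∈ nhds x, ∃ k : ℕ, 1 ≤ k ∧ ∃ y ∈ U, f^[k] y ∈ U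

/-- The (forward) orbit of a point. -/
def orbitSet (f : X → X) (x : X) : Set X := Set.range fun n : ℕ => f^[n] x

/-- Recurrent point. -/
def RecurrentPt [TopologicalSpace X] (f : X → X) (x : X) : Prop :=
  ∀ U ∈ nhds x, ∃ k : ℕ, 1 ≤ k ∧ f^[k] x ∈ U

/-- Minimal point: every point of the orbit closure has `x` in its own orbit closure,
i.e. the orbit closure of `x` is a minimal set. -/
def MinimalPt [TopologicalSpace X] (f : X → X) (x : X) : Prop :=
  ∀ y ∈ closure (orbitSet f x), x ∈ closure (orbitSet f y)

/-- Regularly recurrent point. -/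
def RegRecPt [TopologicalSpace X] (f : X → X) (x : X) : Prop :=
  ∀ U ∈ nhds x, ∃ k : ℕ, 1 ≤ k ∧ ∀ n : ℕ, f^[k * n] x ∈ U

/-- Equicontinuity of the family of iterates of `f`. -/
def EquicontinuousMap [MetricSpace X] (f : X → X) : Prop :=
  ∀ ε > (0 : ℝ), ∃ δ > (0 : ℝ), ∀ x y : X, dist x y < δ →
    ∀ n : ℕ, dist (f^[n] x) (f^[n] y) < ε

/-- `u` is a sensitive point of the subsystem on `S`. -/
def SensitivePtOn [MetricSpace X] (f : X → X) (S : Set X) (u : X) : Prop :=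
  ∃ δ > (0 : ℝ), ∀ U ∈ nhds u, ∃ n : ℕ, ∃ a ∈ U ∩ S, ∃ b ∈ U ∩ S,
    dist (f^[n] a) (f^[n] b) > δ

/-- `u` is a sensitive point of `(X,f)`. -/
def SensitivePt [MetricSpace X] (f : X → X) (u : X) : Prop :=
  ∃ δ > (0 : ℝ), ∀ U ∈ nhds u, ∃ n : ℕ, ∃ a ∈ U, ∃ b ∈ U,
    dist (f^[n] a) (f^[n] b) > δ

/-- Topological transitivity. -/
def TopTransitive {Y : Type*} [TopologicalSpace Y] (g : Y → Y) : Prop :=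
  ∀ U V : Set Y, IsOpen U → U.Nonempty → IsOpen V → V.Nonempty →
    ∃ n : ℕ, 1 ≤ n ∧ (g^[n] '' U ∩ V).Nonempty

/-- Weak mixing: the product system is transitive. -/
def WeaklyMixing [TopologicalSpace X] (f : X → X) : Prop :=
  TopTransitive (fun p : X × X => (f p.1, f p.2))

/-- Strong mixing. -/
def StronglyMixing {Y : Type*} [TopologicalSpace Y] (g : Y → Y) : Prop :=
  ∀ U V : Set Y, IsOpen U → U.Nonempty → IsOpen V → V.Nonempty →
    ∃ N : ℕ, ∀ n ≥ N, (g^[n] '' U ∩ V).Nonempty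

/-- The shift map on the full shift over `d` symbols. -/
def shiftMap (d : ℕ) : (ℕ → Fin d) → (ℕ → Fin d) := fun x n => x (n + 1)

/-- `π` is a factor map from the subsystem `(Y, f^[m])` onto the full shift on `d` symbols. -/
def FactorOntoShift [TopologicalSpace X] (f : X → X) (m : ℕ) (Y : Set X) (d : ℕ)
    (π : X → (ℕ → Fin d)) : Prop :=
  ContinuousOn π Y ∧ π '' Y = Set.univ ∧ ∀ y ∈ Y, π (f^[m] y) = shiftMap d (π y)


section AuxMinimal

variable {X : Type*}

lemma orbitSet_subset_of_mapsTo {g : X → X} {S : Set X} (hS : MapsTo g S S)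
    {m : X} (hm : m ∈ S) : orbitSet g m ⊆ S := by
  rintro _ ⟨n, rfl⟩
  induction n with
  | zero => simpa using hm
  | succ n ih =>
    show g^[n + 1] m ∈ S
    rw [Function.iterate_succ_apply']
    exact hS ih

lemma mapsTo_orbitSet (g : X → X) (m : X) : MapsTo g (orbitSet g m) (orbitSet g m) := by
  rintro _ ⟨n, rfl⟩
  refine ⟨n + 1, ?_⟩
  show g^[n + 1] m = g (g^[n] m)
  rw [Function.iterate_succ_apply']

lemma mapsTo_closure_orbitSet [TopologicalSpace X] {g : X → X} (hg : Continuous g) (m : X) :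
    MapsTo g (closure (orbitSet g m)) (closure (orbitSet g m)) := fun _ hx =>
  map_mem_closure hg hx (mapsTo_orbitSet g m)

/-- In a compact metric space, every nonempty closed invariant set contains a minimal point. -/
lemma exists_minimalPt_in [MetricSpace X] [CompactSpace X] {g : X → X} (hg : Continuous g)
    {T : Set X} (hT : IsClosed T) (hne : T.Nonempty) (hinv : MapsTo g T T) :
    ∃ m ∈ T, MinimalPt g m := by
  set S : Set (Set X) := {A | A.Nonempty ∧ IsClosed A ∧ A ⊆ T ∧ MapsTo g A A} with hS
  have hchain : ∀ c ⊆ S, IsChain (· ⊆ ·) c → c.Nonempty →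
      ∃ lb ∈ S, ∀ s ∈ c, lb ⊆ s := by
    intro c hcS hc hcne
    refine ⟨⋂₀ c, ⟨?_, ?_, ?_, ?_⟩, fun s hs => sInter_subset_of_mem hs⟩
    · haveI : Nonempty c := hcne.to_subtype
      refine IsCompact.nonempty_sInter_of_directed_nonempty_isCompact_isClosed
        ?_ (fun U hU => (hcS hU).1) (fun U hU => (hcS hU).2.1.isCompact)
        (fun U hU => (hcS hU).2.1)
      intro a ha b hb
      rcases eq_or_ne a b with rfl | hab
      · exact ⟨a, ha, Subset.rfl, Subset.rfl⟩
      · rcases hc ha hb hab with h | h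
        · exact ⟨a, ha, Subset.rfl, h⟩
        · exact ⟨b, hb, h, Subset.rfl⟩
    · exact isClosed_sInter fun U hU => (hcS hU).2.1
    · obtain ⟨s, hs⟩ := hcne
      exact (sInter_subset_of_mem hs).trans (hcS hs).2.2.1
    · intro x hx
      rw [mem_sInter] at hx ⊢
      exact fun U hU => (hcS hU).2.2.2 (hx U hU)
  obtain ⟨M, _, hMmin⟩ := zorn_superset_nonempty S hchain T ⟨hne, hT, Subset.rfl, hinv⟩
  obtain ⟨hMne, hMcl, hMT, hMinv⟩ := hMmin.prop
  obtain ⟨m, hm⟩ := hMne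
  have key : ∀ w ∈ M, closure (orbitSet g w) = M := by
    intro w hw
    have hsub : closure (orbitSet g w) ⊆ M :=
      closure_minimal (orbitSet_subset_of_mapsTo hMinv hw) hMcl
    have hCS : closure (orbitSet g w) ∈ S :=
      ⟨⟨w, subset_closure ⟨0, rfl⟩⟩, isClosed_closure, hsub.trans hMT,
        mapsTo_closure_orbitSet hg w⟩
    exact le_antisymm hsub (hMmin.2 hCS hsub)
  refine ⟨m, hMT hm, fun y hy => ?_⟩
  have hyM : y ∈ M := (key m hm) ▸ hy
  rw [key y hyM]
  exact hm

/-- A minimal point for `f^[k]` (`k ≥ 1`) is a minimal point for `f`. -/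
lemma minimalPt_of_iterate [MetricSpace X] [CompactSpace X] {f : X → X} (hf : Continuous f)
    {k : ℕ} (hk : 1 ≤ k) {m : X} (hm : MinimalPt (f^[k]) m) : MinimalPt f m := by
  set g : X → X := f^[k] with hg
  set M' : Set X := closure (orbitSet g m) with hM'
  have hbig : closure (orbitSet f m) ⊆ ⋃ j ∈ Finset.range k, f^[j] '' M' := by
    refine closure_minimal ?_ (isClosed_biUnion_finset fun j _ =>
      ((isClosed_closure.isCompact).image (hf.iterate j)).isClosed)
    rintro _ ⟨n, rfl⟩
    have hjk : n % k < k := Nat.mod_lt n hk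
    refine Set.mem_biUnion (Finset.mem_range.mpr hjk) ⟨(f^[k])^[n / k] m, subset_closure ⟨n / k, rfl⟩, ?_⟩
    show f^[n % k] ((f^[k])^[n / k] m) = f^[n] m
    rw [← Function.iterate_mul, ← Function.iterate_add_apply]
    congr 1
    exact Nat.mod_add_div n k
  intro y hy
  obtain ⟨j, hj, w, hw, rfl⟩ := by
    have := hbig hy
    simpa using this
  have hj' : j < k := hj
  have hgw : g w ∈ M' := mapsTo_closure_orbitSet (hf.iterate k) m hw
  have hmo : m ∈ closure (orbitSet g (g w)) := hm (g w) hgw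
  have hsub : orbitSet g (g w) ⊆ orbitSet f (f^[j] w) := by
    rintro _ ⟨q, rfl⟩
    refine ⟨k * q + (k - j), ?_⟩
    show f^[k * q + (k - j)] (f^[j] w) = g^[q] (g w)
    rw [← Function.iterate_add_apply]
    have h1 : k * q + (k - j) + j = k * (q + 1) := by rw [Nat.mul_succ]; omega
    rw [h1, Function.iterate_mul, Function.iterate_succ_apply]
  exact closure_mono hsub hmo

end AuxMinimal

theorem dense_minimal_points [MetricSpace X] [CompactSpace X]
    (f : X → X) (hf : Continuous f) (hnw : ∀ x : X, NonWanderingPt f x)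
    (hsh : HasShadowing f) :
    Dense {x : X | MinimalPt f x} := by
  rw [Metric.dense_iff]
  intro x r hr
  set ε := r / 3 with hε
  have hε0 : 0 < ε := by positivity
  obtain ⟨δ, hδ0, hδ⟩ := hsh ε hε0
  set δ' := min δ ε with hδ'
  have hδ'0 : 0 < δ' := lt_min hδ0 hε0
  obtain ⟨k, hk, y, hy, hfy⟩ := hnw x (Metric.ball x (δ' / 2))
    (Metric.ball_mem_nhds x (by positivity))
  rw [Metric.mem_ball] at hy hfy
  set p : ℕ → X := fun n => f^[n % k] y with hp
  have hpo : IsPseudoOrbit f δ p := by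
    intro n
    have h1 : (n % k + 1) % k = (n + 1) % k := Nat.mod_add_mod n k 1
    have hmk : n % k < k := Nat.mod_lt n hk
    show dist (f (f^[n % k] y)) (f^[(n + 1) % k] y) < δ
    by_cases hcase : n % k + 1 < k
    · have h2 : (n + 1) % k = n % k + 1 := by rw [← h1, Nat.mod_eq_of_lt hcase]
      rw [h2, ← Function.iterate_succ_apply' f (n % k) y]
      simpa using hδ0
    · have hke : n % k + 1 = k := by omega
      have h2 : (n + 1) % k = 0 := by rw [← h1, hke, Nat.mod_self]
      rw [h2, ← Function.iterate_succ_apply' f (n % k) y, Nat.succ_eq_add_one, hke]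
      have : dist (f^[k] y) y ≤ dist (f^[k] y) x + dist y x := dist_triangle_right _ _ _
      have hδδ : δ' ≤ δ := min_le_left _ _
      simp only [Function.iterate_zero_apply]
      linarith
  obtain ⟨z, hz⟩ := hδ p hpo
  set T : Set X := {w | ∀ n, dist (f^[n] w) (p n) ≤ ε} with hT
  have hTc : IsClosed T := by
    have hTeq : T = ⋂ n, {w | dist (f^[n] w) (p n) ≤ ε} := by
      ext w; simp [hT, Set.mem_iInter]
    rw [hTeq]
    exact isClosed_iInter fun n =>
      isClosed_le ((hf.iterate n).dist continuous_const) continuous_const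
  have hTne : T.Nonempty := ⟨z, fun n => (hz n).le⟩
  have hTinv : MapsTo (f^[k]) T T := by
    intro w hw n
    show dist (f^[n] (f^[k] w)) (p n) ≤ ε
    have h1 : f^[n] (f^[k] w) = f^[n + k] w := (Function.iterate_add_apply f n k w).symm
    have h2 : p (n + k) = p n := by simp [hp, Nat.add_mod_right]
    rw [h1, ← h2]
    exact hw (n + k)
  obtain ⟨m, hmT, hmmin⟩ := exists_minimalPt_in (hf.iterate k) hTc hTne hTinv
  refine ⟨m, Metric.mem_ball.mpr ?_, minimalPt_of_iterate hf hk hmmin⟩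
  have h0 : dist m y ≤ ε := by simpa [hp] using hmT 0
  have htri : dist m x ≤ dist m y + dist y x := dist_triangle _ _ _
  have hδε : δ' ≤ ε := min_le_right _ _
  linarith
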